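/- Let H be an F5-free 3-graph and let {v1, v2, v3} be an edge of H. Then for every vertex set W ⊆ V(H) \ {v1, v2, v3}: (i) the restricted links L_H(v1, W), L_H(v2, W), L_H(v3, W) are pairwise edge-disjoint; and (ii) if three edges e1, e2, e3 ∈ L_H(v1, W) ∪ L_H(v2, W) ∪ L_H(v3, W) form a triangle, then either all three lie in L_H(v_i, W) for some single i ∈ {1,2,3}, or each L_H(v_i, W) (i = 1, 2, 3) contains exactly one of e1, e2, e3. -/

import Mathlib

open Finset

section Defs

variable {V : Type*} [DecidableEq V]

/-- The degree of a vertex `v` in the 3-graph `H`: the number of edges containing `v`. -/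
def degH (H : Finset (Finset V)) (v : V) : ℕ :=
  (H.filter fun e => v ∈ e).card

/-- `H` contains a copy of the generalized triangle `F₅ = {abc, abd, cde}`. -/
def HasF5 (H : Finset (Finset V)) : Prop :=
  ∃ a b c d e : V,
    a ≠ b ∧ a ≠ c ∧ a ≠ d ∧ a ≠ e ∧ b ≠ c ∧ b ≠ d ∧ b ≠ e ∧ c ≠ d ∧ c ≠ e ∧ d ≠ e ∧
    ({a, b, c} : Finset V) ∈ H ∧ ({a, b, d} : Finset V) ∈ H ∧ ({c, d, e} : Finset V) ∈ H

/-- `H` contains a copy of `K₄³⁻ = {abc, abd, acd}`. -/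
def HasK43m (H : Finset (Finset V)) : Prop :=
  ∃ a b c d : V,
    a ≠ b ∧ a ≠ c ∧ a ≠ d ∧ b ≠ c ∧ b ≠ d ∧ c ≠ d ∧
    ({a, b, c} : Finset V) ∈ H ∧ ({a, b, d} : Finset V) ∈ H ∧ ({a, c, d} : Finset V) ∈ H

/-- `H` is 3-partite: the vertex set can be partitioned into three parts so that every
edge has at most one vertex in each part. -/
def Tripartite (H : Finset (Finset V)) : Prop :=
  ∃ P : V → Fin 3, ∀ e ∈ H, ∀ u ∈ e, ∀ v ∈ e, u ≠ v → P u ≠ P v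

/-- The shadow graph `∂H` of the 3-graph `H`: two distinct vertices are adjacent iff
they lie in a common edge of `H`. -/
def shadowG (H : Finset (Finset V)) : SimpleGraph V where
  Adj u v := u ≠ v ∧ ∃ e ∈ H, u ∈ e ∧ v ∈ e
  symm := by
    constructor
    rintro u v ⟨hne, e, he, hu, hv⟩
    exact ⟨hne.symm, e, he, hv, hu⟩
  loopless := by constructor; rintro u ⟨hne, -⟩; exact hne rfl

end Defs

section LinkDefs

variable {V : Type*} [DecidableEq V]

/-- The link of a vertex `v` in the 3-graph `H`: all pairs `e` with `e ∪ {v} ∈ H`. -/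
def link (H : Finset (Finset V)) (v : V) : Finset (Finset V) :=
  (H.filter fun e => v ∈ e).image fun e => e.erase v

/-- The pairs in the link of `v` that lie entirely inside `W`. -/
def linkIn (H : Finset (Finset V)) (v : V) (W : Finset V) : Finset (Finset V) :=
  (link H v).filter fun p => p ⊆ W

end LinkDefs

namespace F5Aux
variable {V : Type*} [DecidableEq V]

lemma linkIn_insert {H : Finset (Finset V)} {u : V} {W : Finset V} {p : Finset V}
    (h : p ∈ linkIn H u W) : p ⊆ W ∧ insert u p ∈ H := by
  unfold linkIn link at h
  simp only [Finset.mem_filter, Finset.mem_image] at h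
  obtain ⟨⟨e, ⟨heH, hue⟩, rfl⟩, hsub⟩ := h
  refine ⟨hsub, ?_⟩
  rw [Finset.insert_erase hue]
  exact heH

lemma linkIn_card {H : Finset (Finset V)} (h3 : ∀ e ∈ H, e.card = 3) {u : V}
    {W : Finset V} {p : Finset V} (h : p ∈ linkIn H u W) : p.card = 2 := by
  unfold linkIn link at h
  simp only [Finset.mem_filter, Finset.mem_image] at h
  obtain ⟨⟨e, ⟨heH, hue⟩, rfl⟩, -⟩ := h
  rw [Finset.card_erase_of_mem hue, h3 e heH]

lemma linkIn_pair {H : Finset (Finset V)} {u : V} {W : Finset V} {a b : V}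
    (h : ({a, b} : Finset V) ∈ linkIn H u W) :
    a ∈ W ∧ b ∈ W ∧ ({a, b, u} : Finset V) ∈ H := by
  obtain ⟨hsub, hins⟩ := linkIn_insert h
  refine ⟨hsub (by simp), hsub (by simp), ?_⟩
  have he : ({a, b, u} : Finset V) = insert u {a, b} := by
    ext t; simp only [Finset.mem_insert, Finset.mem_singleton]; tauto
  rwa [he]

lemma mixed_link {H : Finset (Finset V)} (hF5 : ¬ HasF5 H) {W : Finset V}
    {u w x y z : V} (hu : u ∉ W) (hw : w ∉ W) (huw : u ≠ w)
    (hxy : x ≠ y) (hxz : x ≠ z) (hyz : y ≠ z)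
    (h1 : ({x, y} : Finset V) ∈ linkIn H u W)
    (h2 : ({y, z} : Finset V) ∈ linkIn H u W)
    (h3 : ({x, z} : Finset V) ∈ linkIn H w W) : False := by
  obtain ⟨hxW, hyW, e1⟩ := linkIn_pair h1
  obtain ⟨-, hzW, e2⟩ := linkIn_pair h2
  obtain ⟨-, -, e3⟩ := linkIn_pair h3
  have r1 : ({y, u, x} : Finset V) = {x, y, u} := by
    ext t; simp only [Finset.mem_insert, Finset.mem_singleton]; tauto
  have r2 : ({y, u, z} : Finset V) = {y, z, u} := by
    ext t; simp only [Finset.mem_insert, Finset.mem_singleton]; tauto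
  exact hF5 ⟨y, u, x, z, w,
    fun h => hu (h ▸ hyW), hxy.symm, hyz, fun h => hw (h ▸ hyW),
    fun h => hu (h.symm ▸ hxW), fun h => hu (h.symm ▸ hzW), huw,
    hxz, fun h => hw (h.symm ▸ hxW), fun h => hw (h.symm ▸ hzW),
    r1 ▸ e1, r2 ▸ e2, e3⟩

lemma disj_link {H : Finset (Finset V)} (h3 : ∀ e ∈ H, e.card = 3)
    (hF5 : ¬ HasF5 H) {W : Finset V} {u w t : V} (hu : u ∉ W) (hw : w ∉ W)
    (ht : t ∉ W) (huw : u ≠ w) (hut : u ≠ t) (hwt : w ≠ t)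
    (he : ({u, w, t} : Finset V) ∈ H) :
    Disjoint (linkIn H u W) (linkIn H w W) := by
  rw [Finset.disjoint_left]
  intro p hpu hpw
  obtain ⟨a, b, hab, rfl⟩ := Finset.card_eq_two.mp (linkIn_card h3 hpu)
  obtain ⟨haW, hbW, e1⟩ := linkIn_pair hpu
  obtain ⟨-, -, e2⟩ := linkIn_pair hpw
  exact hF5 ⟨a, b, u, w, t, hab,
    fun h => hu (h ▸ haW), fun h => hw (h ▸ haW), fun h => ht (h ▸ haW),
    fun h => hu (h ▸ hbW), fun h => hw (h ▸ hbW), fun h => ht (h ▸ hbW),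
    huw, hut, hwt, e1, e2, he⟩

lemma filter_card_one {α : Type*} [DecidableEq α] {a b c : α} {P : α → Prop}
    [DecidablePred P] (_hab : a ≠ b) (_hac : a ≠ c) (_hbc : b ≠ c)
    (h : (P a ∧ ¬ P b ∧ ¬ P c) ∨ (¬ P a ∧ P b ∧ ¬ P c) ∨ (¬ P a ∧ ¬ P b ∧ P c)) :
    (({a, b, c} : Finset α).filter P).card = 1 := by
  rcases h with ⟨ha, hb, hc⟩ | ⟨ha, hb, hc⟩ | ⟨ha, hb, hc⟩ <;>
    simp [Finset.filter_insert, Finset.filter_singleton, ha, hb, hc]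

end F5Aux

/-- Let `H` be an `F₅`-free 3-graph, `{v₁, v₂, v₃}` an edge of `H`, and
`W ⊆ V(H) \ {v₁, v₂, v₃}`.  Then
(i) `L_H(v₁, W)`, `L_H(v₂, W)`, `L_H(v₃, W)` are pairwise edge-disjoint, and
(ii) if three edges of `L_H(v₁, W) ∪ L_H(v₂, W) ∪ L_H(v₃, W)` form a triangle, then
either all three lie in one `L_H(vᵢ, W)`, or each `L_H(vᵢ, W)` contains exactly one
of them. -/
theorem F5_free_restricted_links (V : Type*) [Fintype V] [DecidableEq V]
    (H : Finset (Finset V)) (h3 : ∀ e ∈ H, e.card = 3) (hF5 : ¬ HasF5 H)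
    (v₁ v₂ v₃ : V) (hedge : ({v₁, v₂, v₃} : Finset V) ∈ H)
    (W : Finset V) (hW : Disjoint W ({v₁, v₂, v₃} : Finset V)) :
    (Disjoint (linkIn H v₁ W) (linkIn H v₂ W) ∧
     Disjoint (linkIn H v₁ W) (linkIn H v₃ W) ∧
     Disjoint (linkIn H v₂ W) (linkIn H v₃ W)) ∧
    (∀ x y z : V, x ≠ y → x ≠ z → y ≠ z →
      ({x, y} : Finset V) ∈ linkIn H v₁ W ∪ linkIn H v₂ W ∪ linkIn H v₃ W →
      ({y, z} : Finset V) ∈ linkIn H v₁ W ∪ linkIn H v₂ W ∪ linkIn H v₃ W →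
      ({x, z} : Finset V) ∈ linkIn H v₁ W ∪ linkIn H v₂ W ∪ linkIn H v₃ W →
      ((({x, y} : Finset V) ∈ linkIn H v₁ W ∧ ({y, z} : Finset V) ∈ linkIn H v₁ W ∧
          ({x, z} : Finset V) ∈ linkIn H v₁ W) ∨
       (({x, y} : Finset V) ∈ linkIn H v₂ W ∧ ({y, z} : Finset V) ∈ linkIn H v₂ W ∧
          ({x, z} : Finset V) ∈ linkIn H v₂ W) ∨
       (({x, y} : Finset V) ∈ linkIn H v₃ W ∧ ({y, z} : Finset V) ∈ linkIn H v₃ W ∧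
          ({x, z} : Finset V) ∈ linkIn H v₃ W)) ∨
      ((({({x, y} : Finset V), {y, z}, {x, z}} : Finset (Finset V)).filter
            (· ∈ linkIn H v₁ W)).card = 1 ∧
       (({({x, y} : Finset V), {y, z}, {x, z}} : Finset (Finset V)).filter
            (· ∈ linkIn H v₂ W)).card = 1 ∧
       (({({x, y} : Finset V), {y, z}, {x, z}} : Finset (Finset V)).filter
            (· ∈ linkIn H v₃ W)).card = 1)) := by
  have key3 : ∀ (s : Finset V) (p q : V), s = {p, q} → s.card = 3 → False := by
    rintro s p q rfl h
    have hle := Finset.card_insert_le p ({q} : Finset V)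
    simp only [Finset.card_singleton] at hle
    omega
  have hcard := h3 _ hedge
  have h12 : v₁ ≠ v₂ := by
    rintro rfl
    exact key3 _ v₁ v₃ (by ext t; simp only [Finset.mem_insert, Finset.mem_singleton]; tauto) hcard
  have h13 : v₁ ≠ v₃ := by
    rintro rfl
    exact key3 _ v₁ v₂ (by ext t; simp only [Finset.mem_insert, Finset.mem_singleton]; tauto) hcard
  have h23 : v₂ ≠ v₃ := by
    rintro rfl
    exact key3 _ v₁ v₂ (by ext t; simp only [Finset.mem_insert, Finset.mem_singleton]; tauto) hcard
  have hv1 : v₁ ∉ W := fun h => Finset.disjoint_left.mp hW h (by simp)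
  have hv2 : v₂ ∉ W := fun h => Finset.disjoint_left.mp hW h (by simp)
  have hv3 : v₃ ∉ W := fun h => Finset.disjoint_left.mp hW h (by simp)
  have he132 : ({v₁, v₃, v₂} : Finset V) ∈ H := by
    have : ({v₁, v₃, v₂} : Finset V) = {v₁, v₂, v₃} := by
      ext t; simp only [Finset.mem_insert, Finset.mem_singleton]; tauto
    rwa [this]
  have he231 : ({v₂, v₃, v₁} : Finset V) ∈ H := by
    have : ({v₂, v₃, v₁} : Finset V) = {v₁, v₂, v₃} := by
      ext t; simp only [Finset.mem_insert, Finset.mem_singleton]; tauto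
    rwa [this]
  have D12 := F5Aux.disj_link h3 hF5 hv1 hv2 hv3 h12 h13 h23 hedge
  have D13 := F5Aux.disj_link h3 hF5 hv1 hv3 hv2 h13 h12 h23.symm he132
  have D23 := F5Aux.disj_link h3 hF5 hv2 hv3 hv1 h23 h12.symm h13.symm he231
  have nm12 : ∀ p, p ∈ linkIn H v₁ W → p ∉ linkIn H v₂ W := fun _ h => Finset.disjoint_left.mp D12 h
  have nm21 : ∀ p, p ∈ linkIn H v₂ W → p ∉ linkIn H v₁ W := fun _ h => Finset.disjoint_right.mp D12 h
  have nm13 : ∀ p, p ∈ linkIn H v₁ W → p ∉ linkIn H v₃ W := fun _ h => Finset.disjoint_left.mp D13 h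
  have nm31 : ∀ p, p ∈ linkIn H v₃ W → p ∉ linkIn H v₁ W := fun _ h => Finset.disjoint_right.mp D13 h
  have nm23 : ∀ p, p ∈ linkIn H v₂ W → p ∉ linkIn H v₃ W := fun _ h => Finset.disjoint_left.mp D23 h
  have nm32 : ∀ p, p ∈ linkIn H v₃ W → p ∉ linkIn H v₂ W := fun _ h => Finset.disjoint_right.mp D23 h
  refine ⟨⟨D12, D13, D23⟩, ?_⟩
  intro x y z hxy hxz hyz hXY hYZ hXZ
  have pab : ({x, y} : Finset V) ≠ {y, z} := by
    intro h
    have hx : x ∈ ({y, z} : Finset V) := h ▸ (by simp)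
    simp only [Finset.mem_insert, Finset.mem_singleton] at hx
    tauto
  have pac : ({x, y} : Finset V) ≠ {x, z} := by
    intro h
    have hy : y ∈ ({x, z} : Finset V) := h ▸ (by simp)
    simp only [Finset.mem_insert, Finset.mem_singleton] at hy
    rcases hy with h' | h'
    · exact hxy h'.symm
    · exact hyz h'
  have pbc : ({y, z} : Finset V) ≠ {x, z} := by
    intro h
    have hy : y ∈ ({x, z} : Finset V) := h ▸ (by simp)
    simp only [Finset.mem_insert, Finset.mem_singleton] at hy
    rcases hy with h' | h'
    · exact hxy h'.symm
    · exact hyz h'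
  simp only [Finset.mem_union] at hXY hYZ hXZ
  rcases hXY with (hA | hA) | hA <;> rcases hYZ with (hB | hB) | hB <;> rcases hXZ with (hC | hC) | hC
  · exact Or.inl (Or.inl ⟨hA, hB, hC⟩)
  · exact (F5Aux.mixed_link hF5 hv1 hv2 h12 hxy hxz hyz hA hB hC).elim
  · exact (F5Aux.mixed_link hF5 hv1 hv3 h13 hxy hxz hyz hA hB hC).elim
  · exact (F5Aux.mixed_link hF5 hv1 hv2 h12 hxy.symm hyz hxz
      (by rw [Finset.pair_comm]; exact hA) hC hB).elim
  · exact (F5Aux.mixed_link hF5 hv2 hv1 h12.symm hyz hxy.symm hxz.symm hB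
      (by rw [Finset.pair_comm]; exact hC) (by rw [Finset.pair_comm]; exact hA)).elim
  · exact Or.inr ⟨F5Aux.filter_card_one pab pac pbc (Or.inl ⟨hA, nm21 _ hB, nm31 _ hC⟩),
      F5Aux.filter_card_one pab pac pbc (Or.inr (Or.inl ⟨nm12 _ hA, hB, nm32 _ hC⟩)),
      F5Aux.filter_card_one pab pac pbc (Or.inr (Or.inr ⟨nm13 _ hA, nm23 _ hB, hC⟩))⟩
  · exact (F5Aux.mixed_link hF5 hv1 hv3 h13 hxy.symm hyz hxz
      (by rw [Finset.pair_comm]; exact hA) hC hB).elim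
  · exact Or.inr ⟨F5Aux.filter_card_one pab pac pbc (Or.inl ⟨hA, nm31 _ hB, nm21 _ hC⟩),
      F5Aux.filter_card_one pab pac pbc (Or.inr (Or.inr ⟨nm12 _ hA, nm32 _ hB, hC⟩)),
      F5Aux.filter_card_one pab pac pbc (Or.inr (Or.inl ⟨nm13 _ hA, hB, nm23 _ hC⟩))⟩
  · exact (F5Aux.mixed_link hF5 hv3 hv1 h13.symm hyz hxy.symm hxz.symm hB
      (by rw [Finset.pair_comm]; exact hC) (by rw [Finset.pair_comm]; exact hA)).elim
  · exact (F5Aux.mixed_link hF5 hv1 hv2 h12 hyz hxy.symm hxz.symm hB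
      (by rw [Finset.pair_comm]; exact hC) (by rw [Finset.pair_comm]; exact hA)).elim
  · exact (F5Aux.mixed_link hF5 hv2 hv1 h12.symm hxy.symm hyz hxz
      (by rw [Finset.pair_comm]; exact hA) hC hB).elim
  · exact Or.inr ⟨F5Aux.filter_card_one pab pac pbc (Or.inr (Or.inl ⟨nm21 _ hA, hB, nm31 _ hC⟩)),
      F5Aux.filter_card_one pab pac pbc (Or.inl ⟨hA, nm12 _ hB, nm32 _ hC⟩),
      F5Aux.filter_card_one pab pac pbc (Or.inr (Or.inr ⟨nm23 _ hA, nm13 _ hB, hC⟩))⟩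
  · exact (F5Aux.mixed_link hF5 hv2 hv1 h12.symm hxy hxz hyz hA hB hC).elim
  · exact Or.inl (Or.inr (Or.inl ⟨hA, hB, hC⟩))
  · exact (F5Aux.mixed_link hF5 hv2 hv3 h23 hxy hxz hyz hA hB hC).elim
  · exact Or.inr ⟨F5Aux.filter_card_one pab pac pbc (Or.inr (Or.inr ⟨nm21 _ hA, nm31 _ hB, hC⟩)),
      F5Aux.filter_card_one pab pac pbc (Or.inl ⟨hA, nm32 _ hB, nm12 _ hC⟩),
      F5Aux.filter_card_one pab pac pbc (Or.inr (Or.inl ⟨nm23 _ hA, hB, nm13 _ hC⟩))⟩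
  · exact (F5Aux.mixed_link hF5 hv2 hv3 h23 hxy.symm hyz hxz
      (by rw [Finset.pair_comm]; exact hA) hC hB).elim
  · exact (F5Aux.mixed_link hF5 hv3 hv2 h23.symm hyz hxy.symm hxz.symm hB
      (by rw [Finset.pair_comm]; exact hC) (by rw [Finset.pair_comm]; exact hA)).elim
  · exact (F5Aux.mixed_link hF5 hv1 hv3 h13 hyz hxy.symm hxz.symm hB
      (by rw [Finset.pair_comm]; exact hC) (by rw [Finset.pair_comm]; exact hA)).elim
  · exact Or.inr ⟨F5Aux.filter_card_one pab pac pbc (Or.inr (Or.inl ⟨nm31 _ hA, hB, nm21 _ hC⟩)),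
      F5Aux.filter_card_one pab pac pbc (Or.inr (Or.inr ⟨nm32 _ hA, nm12 _ hB, hC⟩)),
      F5Aux.filter_card_one pab pac pbc (Or.inl ⟨hA, nm13 _ hB, nm23 _ hC⟩)⟩
  · exact (F5Aux.mixed_link hF5 hv3 hv1 h13.symm hxy.symm hyz hxz
      (by rw [Finset.pair_comm]; exact hA) hC hB).elim
  · exact Or.inr ⟨F5Aux.filter_card_one pab pac pbc (Or.inr (Or.inr ⟨nm31 _ hA, nm21 _ hB, hC⟩)),
      F5Aux.filter_card_one pab pac pbc (Or.inr (Or.inl ⟨nm32 _ hA, hB, nm12 _ hC⟩)),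
      F5Aux.filter_card_one pab pac pbc (Or.inl ⟨hA, nm23 _ hB, nm13 _ hC⟩)⟩
  · exact (F5Aux.mixed_link hF5 hv2 hv3 h23 hyz hxy.symm hxz.symm hB
      (by rw [Finset.pair_comm]; exact hC) (by rw [Finset.pair_comm]; exact hA)).elim
  · exact (F5Aux.mixed_link hF5 hv3 hv2 h23.symm hxy.symm hyz hxz
      (by rw [Finset.pair_comm]; exact hA) hC hB).elim
  · exact (F5Aux.mixed_link hF5 hv3 hv1 h13.symm hxy hxz hyz hA hB hC).elim
  · exact (F5Aux.mixed_link hF5 hv3 hv2 h23.symm hxy hxz hyz hA hB hC).elim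
  · exact Or.inl (Or.inr (Or.inr ⟨hA, hB, hC⟩))
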